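/- Let G be a group, V a Klein four subgroup of SO(3), and fix an isomorphism V ≅ (ℤ/2)², so that a homomorphism f: G → V has components f₁, f₂ ∈ Hom(G, ℤ/2). Two surjective homomorphisms f, g: G → V are conjugate in SO(3) (i.e., there exists h ∈ SO(3) with g(x) = h·f(x)·h⁻¹ for all x ∈ G) if and only if f₁ ∧ f₂ = g₁ ∧ g₂ in the exterior power ⋀²(Hom(G, ℤ/2)). -/

import Mathlib

noncomputable section

set_option synthInstance.maxHeartbeats 1000000
set_option maxHeartbeats 1000000

open Matrix

abbrev Mat3 := Matrix (Fin 3) (Fin 3) ℝ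

def rot3 (a : Fin 3 → ℝ) : Mat3 := (2:ℝ) • Matrix.vecMulVec a a - 1

lemma vecMulVec_mulVec3 (a b x : Fin 3 → ℝ) : vecMulVec a b *ᵥ x = (b ⬝ᵥ x) • a := by
  funext i
  simp only [mulVec, dotProduct, vecMulVec_apply, Fin.sum_univ_three, Pi.smul_apply, smul_eq_mul]
  ring

lemma rot3_mulVec (a x : Fin 3 → ℝ) : (rot3 a) *ᵥ x = (2 * (a ⬝ᵥ x)) • a - x := by
  rw [rot3, Matrix.sub_mulVec, Matrix.smul_mulVec, Matrix.one_mulVec, vecMulVec_mulVec3,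
    smul_smul]

lemma dot_pos_of_ne_zero {v : Fin 3 → ℝ} (hv : v ≠ 0) : 0 < v ⬝ᵥ v := by
  rcases lt_or_eq_of_le (Finset.sum_nonneg fun i _ => mul_self_nonneg (v i)) with h | h
  · exact h
  · exact absurd (dotProduct_self_eq_zero.mp h.symm) hv

/-- matrix with columns a, b, c -/
def Pcols (a b c : Fin 3 → ℝ) : Mat3 := Matrix.of fun i j => ![a, b, c] j i

lemma Pcols_col (a b c : Fin 3 → ℝ) (j : Fin 3) :
    (fun i => Pcols a b c i j) = ![a, b, c] j := rfl

lemma transpose_Pcols_mul (a b c : Fin 3 → ℝ) (i j : Fin 3) :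
    ((Pcols a b c)ᵀ * Pcols a b c) i j = ![a, b, c] i ⬝ᵥ ![a, b, c] j := by
  simp [Matrix.mul_apply, Matrix.transpose_apply, dotProduct, Pcols]

lemma Pcols_orth {a b c : Fin 3 → ℝ} (ha : a ⬝ᵥ a = 1) (hb : b ⬝ᵥ b = 1) (hc : c ⬝ᵥ c = 1)
    (hab : a ⬝ᵥ b = 0) (hac : a ⬝ᵥ c = 0) (hbc : b ⬝ᵥ c = 0) :
    (Pcols a b c)ᵀ * Pcols a b c = 1 := by
  have hba : b ⬝ᵥ a = 0 := by rwa [dotProduct_comm]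
  have hca : c ⬝ᵥ a = 0 := by rwa [dotProduct_comm]
  have hcb : c ⬝ᵥ b = 0 := by rwa [dotProduct_comm]
  ext i j
  rw [transpose_Pcols_mul]
  fin_cases i <;> fin_cases j <;>
    simp [ha, hb, hc, hab, hac, hbc, hba, hca, hcb, Matrix.one_apply]

lemma Pcols_mul_transpose {a b c : Fin 3 → ℝ} (h : (Pcols a b c)ᵀ * Pcols a b c = 1) :
    Pcols a b c * (Pcols a b c)ᵀ = 1 := mul_eq_one_comm.mp h

lemma transpose_mulVec_eq (a b c u : Fin 3 → ℝ) :
    (Pcols a b c)ᵀ *ᵥ u = ![a ⬝ᵥ u, b ⬝ᵥ u, c ⬝ᵥ u] := by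
  funext i
  fin_cases i <;>
    simp [Matrix.mulVec, Matrix.transpose_apply, dotProduct, Pcols, Fin.sum_univ_three, mul_comm]

lemma mul_Pcols (A : Mat3) (a b c : Fin 3 → ℝ) :
    A * Pcols a b c = Pcols (A *ᵥ a) (A *ᵥ b) (A *ᵥ c) := by
  ext i j
  fin_cases j <;>
    simp [Pcols, Matrix.mul_apply, Matrix.mulVec, dotProduct]

lemma Pcols_mul_diagonal (a b c : Fin 3 → ℝ) (d : Fin 3 → ℝ) :
    Pcols a b c * Matrix.diagonal d = Pcols (d 0 • a) (d 1 • b) (d 2 • c) := by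
  ext i j
  rw [Matrix.mul_diagonal]
  fin_cases j <;> simp [Pcols, mul_comm]

lemma normalize_unit_aux {d : ℝ} (hd : 0 < d) :
    (Real.sqrt d)⁻¹ * ((Real.sqrt d)⁻¹ * d) = 1 := by
  have hts : Real.sqrt d * Real.sqrt d = d := Real.mul_self_sqrt hd.le
  have ht0 : Real.sqrt d ≠ 0 := ne_of_gt (Real.sqrt_pos.mpr hd)
  field_simp
  rw [Real.sq_sqrt hd.le]

lemma normalize_unit {v : Fin 3 → ℝ} (hv : 0 < v ⬝ᵥ v) :
    ((Real.sqrt (v ⬝ᵥ v))⁻¹ • v) ⬝ᵥ ((Real.sqrt (v ⬝ᵥ v))⁻¹ • v) = 1 := by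
  rw [smul_dotProduct, dotProduct_smul, smul_eq_mul, smul_eq_mul]
  exact normalize_unit_aux hv

lemma so3_involution_eq_rot3 {A : Mat3} (horth : Aᵀ * A = 1) (hinv : A * A = 1)
    (hdet : A.det = 1) (hne : A ≠ 1) : ∃ a, a ⬝ᵥ a = 1 ∧ A = rot3 a := by
  have hsymm : Aᵀ = A := by
    calc Aᵀ = Aᵀ * (A * A) := by rw [hinv, mul_one]
    _ = (Aᵀ * A) * A := by rw [mul_assoc]
    _ = A := by rw [horth, one_mul]
  have hdet0 : (A - 1).det = 0 := by
    have h1 : Aᵀ * (A - 1) = (1 - A)ᵀ := by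
      rw [Matrix.mul_sub, horth, mul_one, Matrix.transpose_sub, Matrix.transpose_one, hsymm]
    have h2 : Matrix.det Aᵀ * Matrix.det (A - 1) = Matrix.det (1 - A) := by
      rw [← Matrix.det_mul, h1, Matrix.det_transpose]
    rw [Matrix.det_transpose, hdet, one_mul] at h2
    have h3 : (1 - A : Mat3) = -(A - 1) := (neg_sub _ _).symm
    rw [h3, Matrix.det_neg] at h2
    simp only [Fintype.card_fin] at h2
    norm_num at h2
    linarith
  obtain ⟨v, hv0, hv⟩ := (Matrix.exists_mulVec_eq_zero_iff).mpr hdet0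
  have hAv : A *ᵥ v = v := by
    rw [Matrix.sub_mulVec, Matrix.one_mulVec, sub_eq_zero] at hv
    exact hv
  have htpos : 0 < v ⬝ᵥ v := dot_pos_of_ne_zero hv0
  set a : Fin 3 → ℝ := (Real.sqrt (v ⬝ᵥ v))⁻¹ • v with ha_def
  have ha : a ⬝ᵥ a = 1 := normalize_unit htpos
  have hAa : A *ᵥ a = a := by rw [ha_def, Matrix.mulVec_smul, hAv]
  have hdotA : ∀ w x, A *ᵥ w = w → w ⬝ᵥ (A *ᵥ x) = w ⬝ᵥ x := by
    intro w x hw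
    rw [Matrix.dotProduct_mulVec, ← Matrix.mulVec_transpose, hsymm, hw]
  have hperp : ∀ x, a ⬝ᵥ x = 0 → A *ᵥ x = -x := by
    intro x hx
    by_contra hne'
    set y := A *ᵥ x + x with hy_def
    have hy0 : y ≠ 0 := by
      intro h
      exact hne' (by rw [← sub_eq_zero]; rw [hy_def] at h; linear_combination (norm := module) h)
    have hAy : A *ᵥ y = y := by
      rw [hy_def, Matrix.mulVec_add, Matrix.mulVec_mulVec, hinv, Matrix.one_mulVec]
      module
    have hay : a ⬝ᵥ y = 0 := by
      rw [hy_def, dotProduct_add, hdotA a x hAa, hx]; norm_num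
    have hspos : 0 < y ⬝ᵥ y := dot_pos_of_ne_zero hy0
    set b : Fin 3 → ℝ := (Real.sqrt (y ⬝ᵥ y))⁻¹ • y with hb_def
    have hb : b ⬝ᵥ b = 1 := normalize_unit hspos
    have hAb : A *ᵥ b = b := by rw [hb_def, Matrix.mulVec_smul, hAy]
    have hab : a ⬝ᵥ b = 0 := by
      rw [hb_def, dotProduct_smul, hay, smul_zero]
    set c : Fin 3 → ℝ := a ⨯₃ b with hc_def
    have hcc : c ⬝ᵥ c = 1 := by rw [hc_def, cross_dot_cross, ha, hb, hab]; ring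
    have hac : a ⬝ᵥ c = 0 := dot_self_cross a b
    have hbc : b ⬝ᵥ c = 0 := dot_cross_self a b
    set P := Pcols a b c with hP_def
    have hP : Pᵀ * P = 1 := Pcols_orth ha hb hcc hab hac hbc
    have hP' : P * Pᵀ = 1 := Pcols_mul_transpose hP
    set u := A *ᵥ c with hu_def
    have hau : a ⬝ᵥ u = 0 := by rw [hu_def, hdotA a c hAa, hac]
    have hbu : b ⬝ᵥ u = 0 := by rw [hu_def, hdotA b c hAb, hbc]
    set μ := c ⬝ᵥ u with hμ_def
    have hu : u = μ • c := by
      have h5 : u = (P * Pᵀ) *ᵥ u := by rw [hP', Matrix.one_mulVec]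
      rw [← Matrix.mulVec_mulVec, transpose_mulVec_eq, hau, hbu, ← hμ_def] at h5
      have h6 : (![0, 0, μ] : Fin 3 → ℝ) = μ • (Pi.single 2 1 : Fin 3 → ℝ) := by
        funext i; fin_cases i <;> simp [Pi.single_apply]
      rw [h6, Matrix.mulVec_smul, Matrix.mulVec_single] at h5
      have h7 : MulOpposite.op (1:ℝ) • P.col 2 = c := by funext i; simp [hP_def, Pcols, Matrix.col]
      rw [h7] at h5
      exact h5
    have hAP : A * P = P * Matrix.diagonal ![1, 1, μ] := by
      rw [hP_def, mul_Pcols, Pcols_mul_diagonal, hAa, hAb, ← hu_def, hu]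
      norm_num
      rfl
    have hdP : P.det * P.det = 1 := by
      have := congrArg Matrix.det hP'
      rwa [Matrix.det_mul, Matrix.det_transpose, Matrix.det_one] at this
    have hdP0 : P.det ≠ 0 := by intro h; rw [h] at hdP; norm_num at hdP
    have hdet2 := congrArg Matrix.det hAP
    rw [Matrix.det_mul, Matrix.det_mul, hdet, one_mul, Matrix.det_diagonal] at hdet2
    simp only [Fin.prod_univ_three] at hdet2
    norm_num at hdet2
    change P.det = P.det * μ at hdet2
    have hμ1 : μ = 1 := by
      have h9 : P.det * μ = P.det * 1 := by rw [mul_one]; linarith [hdet2]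
      exact mul_left_cancel₀ hdP0 h9
    rw [hμ1] at hAP
    have hdiag1 : (Matrix.diagonal ![1, 1, 1] : Mat3) = 1 := by
      ext i j; fin_cases i <;> fin_cases j <;> simp [Matrix.diagonal, Matrix.one_apply]
    rw [hdiag1, mul_one] at hAP
    have : A = 1 := by
      calc A = A * (P * Pᵀ) := by rw [hP', mul_one]
      _ = (A * P) * Pᵀ := by rw [mul_assoc]
      _ = P * Pᵀ := by rw [hAP]
      _ = 1 := hP'
    exact hne this
  refine ⟨a, ha, ?_⟩
  have hAx : ∀ x, A *ᵥ x = (rot3 a) *ᵥ x := by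
    intro x
    have hx' : a ⬝ᵥ (x - (a ⬝ᵥ x) • a) = 0 := by
      rw [dotProduct_sub, dotProduct_smul, ha]
      simp
    have h8 := hperp _ hx'
    rw [Matrix.mulVec_sub, Matrix.mulVec_smul, hAa] at h8
    rw [rot3_mulVec]
    linear_combination (norm := module) h8
  ext i j
  have := congrFun (hAx (Pi.single j 1)) i
  rw [Matrix.mulVec_single, Matrix.mulVec_single] at this
  simpa using this

lemma vecMulVec_smul_smul (t : ℝ) (b : Fin 3 → ℝ) :
    Matrix.vecMulVec (t • b) (t • b) = (t * t) • Matrix.vecMulVec b b := by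
  ext i j
  simp [Matrix.vecMulVec_apply, Matrix.smul_apply, Pi.smul_apply, smul_eq_mul]
  ring

lemma axes_orth {a b : Fin 3 → ℝ} (ha : a ⬝ᵥ a = 1) (hb : b ⬝ᵥ b = 1)
    (hcomm : rot3 a * rot3 b = rot3 b * rot3 a) (hne : rot3 a ≠ rot3 b) : a ⬝ᵥ b = 0 := by
  set t := a ⬝ᵥ b with ht_def
  by_contra ht
  have hba : b ⬝ᵥ a = t := by rw [ht_def, dotProduct_comm]
  have hbb : rot3 b *ᵥ b = b := by rw [rot3_mulVec, hb]; module
  have h1 : (rot3 a * rot3 b) *ᵥ b = (rot3 b * rot3 a) *ᵥ b := by rw [hcomm]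
  rw [← Matrix.mulVec_mulVec, ← Matrix.mulVec_mulVec, hbb] at h1
  rw [rot3_mulVec, ← ht_def] at h1
  rw [rot3_mulVec] at h1
  have hdot : b ⬝ᵥ ((2 * t) • a - b) = 2 * t * t - 1 := by
    rw [dotProduct_sub, dotProduct_smul, hba, hb]
    simp only [smul_eq_mul]
    try ring
  rw [hdot] at h1
  -- h1 : (2t) • a - b = (2*(2t²-1)) • b - ((2t) • a - b)
  have h2 : (4 * t) • a = (4 * (t * t)) • b := by
    have := h1
    linear_combination (norm := module) this
  have h3 : a = t • b := by
    have h4 : (4 * t) ≠ 0 := by intro h; apply ht; linarith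
    have := congrArg (fun z => (4 * t)⁻¹ • z) h2
    simp only [smul_smul] at this
    rw [inv_mul_cancel₀ h4, one_smul] at this
    rw [this]
    congr 1
    field_simp
  have ht2 : t * t = 1 := by
    have := ha
    rw [h3, smul_dotProduct, dotProduct_smul, hb] at this
    simpa [smul_eq_mul] using this
  apply hne
  rw [rot3, rot3, h3, vecMulVec_smul_smul, ht2, one_smul]

/-- the diagonal matrix with 1 in position i and -1 elsewhere -/
def Dmat (i : Fin 3) : Mat3 := (2:ℝ) • Matrix.diagonal (Pi.single i 1) - 1

lemma Pcols_diag_single (a b c : Fin 3 → ℝ) (i : Fin 3) :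
    Pcols a b c * Matrix.diagonal (Pi.single i (1:ℝ)) * (Pcols a b c)ᵀ
      = Matrix.vecMulVec (![a,b,c] i) (![a,b,c] i) := by
  ext r s
  simp only [Matrix.mul_apply, Matrix.diagonal_apply, Matrix.transpose_apply, Pcols,
    Matrix.vecMulVec_apply, Pi.single_apply, Fin.sum_univ_three, Matrix.of_apply]
  fin_cases i <;> simp

lemma Pcols_D {a b c : Fin 3 → ℝ} (hP' : Pcols a b c * (Pcols a b c)ᵀ = 1) (i : Fin 3) :
    Pcols a b c * Dmat i * (Pcols a b c)ᵀ = rot3 (![a,b,c] i) := by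
  have h1 : Pcols a b c * Dmat i * (Pcols a b c)ᵀ
      = (2:ℝ) • (Pcols a b c * Matrix.diagonal (Pi.single i 1) * (Pcols a b c)ᵀ)
        - Pcols a b c * (Pcols a b c)ᵀ := by
    rw [Dmat, Matrix.mul_sub, Matrix.mul_one, Matrix.sub_mul]
    rw [Matrix.mul_smul, Matrix.smul_mul]
  rw [h1, Pcols_diag_single, hP', rot3]

lemma Dmat_entries (i r s : Fin 3) :
    Dmat i r s = if r = s then (if r = i then (1:ℝ) else -1) else 0 := by
  rw [Dmat]
  simp only [Matrix.sub_apply, Matrix.smul_apply, Matrix.diagonal_apply, Matrix.one_apply,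
    Pi.single_apply, smul_eq_mul]
  by_cases h1 : r = s
  · subst h1
    by_cases h2 : r = i <;> simp [h2] <;> norm_num
  · simp [h1]

/-- a rotation by π/2-style signed permutation matrix realizing the transposition of
axes x and y -/
def swapMat (x y : Fin 3) : Mat3 := Matrix.of fun i j =>
  if (i = x ∧ j = y) ∨ (i = y ∧ j = x) then 1
  else if i = j ∧ i ≠ x ∧ i ≠ y then -1 else 0

lemma swapMat_orth (x y : Fin 3) (hxy : x ≠ y) : (swapMat x y)ᵀ * swapMat x y = 1 := by
  ext r s
  simp only [Matrix.mul_apply, Fin.sum_univ_three, Matrix.transpose_apply,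
    Matrix.one_apply, swapMat, Matrix.of_apply]
  fin_cases x <;> fin_cases y <;>
    first
    | exact absurd rfl hxy
    | fin_cases r <;> fin_cases s <;> norm_num [Fin.ext_iff]

lemma swapMat_det (x y : Fin 3) (hxy : x ≠ y) : (swapMat x y).det = 1 := by
  rw [Matrix.det_fin_three]
  simp only [swapMat, Matrix.of_apply]
  fin_cases x <;> fin_cases y <;>
    first
    | exact absurd rfl hxy
    | norm_num [Fin.ext_iff]

lemma swapMat_conj (x y : Fin 3) (hxy : x ≠ y) (i : Fin 3) :
    swapMat x y * Dmat i * (swapMat x y)ᵀ = Dmat (Equiv.swap x y i) := by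
  ext r s
  simp only [Matrix.mul_apply, Fin.sum_univ_three, Matrix.transpose_apply,
    swapMat, Matrix.of_apply, Dmat_entries, Equiv.swap_apply_def]
  fin_cases x <;> fin_cases y <;>
    first
    | exact absurd rfl hxy
    | fin_cases i <;> fin_cases r <;> fin_cases s <;> norm_num [Fin.ext_iff]

lemma swap_realized (x y : Fin 3) (hxy : x ≠ y) :
    ∃ R : Mat3, Rᵀ * R = 1 ∧ R.det = 1 ∧ ∀ i, R * Dmat i * Rᵀ = Dmat (Equiv.swap x y i) :=
  ⟨swapMat x y, swapMat_orth x y hxy, swapMat_det x y hxy, swapMat_conj x y hxy⟩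

lemma perm_realized (σ : Equiv.Perm (Fin 3)) :
    ∃ R : Mat3, Rᵀ * R = 1 ∧ R.det = 1 ∧ ∀ i, R * Dmat i * Rᵀ = Dmat (σ i) := by
  refine Equiv.Perm.swap_induction_on σ ⟨1, by simp, by simp, fun i => by simp⟩ ?_
  intro f x y hxy ih
  obtain ⟨Rf, hf1, hf2, hf3⟩ := ih
  obtain ⟨Rs, hs1, hs2, hs3⟩ := swap_realized x y hxy
  refine ⟨Rs * Rf, ?_, ?_, fun i => ?_⟩
  · rw [Matrix.transpose_mul]
    calc Rfᵀ * Rsᵀ * (Rs * Rf) = Rfᵀ * (Rsᵀ * Rs) * Rf := by noncomm_ring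
    _ = 1 := by rw [hs1, mul_one, hf1]
  · rw [Matrix.det_mul, hf2, hs2, mul_one]
  · rw [Matrix.transpose_mul]
    calc Rs * Rf * Dmat i * (Rfᵀ * Rsᵀ) = Rs * (Rf * Dmat i * Rfᵀ) * Rsᵀ := by noncomm_ring
    _ = Rs * Dmat (f i) * Rsᵀ := by rw [hf3]
    _ = Dmat (Equiv.swap x y (f i)) := hs3 _
    _ = Dmat ((Equiv.swap x y * f) i) := by rw [Equiv.Perm.mul_apply]


/-- `SO3` is the group of 3×3 real orthogonal matrices of determinant one,
as a subgroup of the orthogonal group `O(3)`. -/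
def SO3 : Subgroup ↥(Matrix.orthogonalGroup (Fin 3) ℝ) where
  carrier := {A | Matrix.det (A : Matrix (Fin 3) (Fin 3) ℝ) = 1}
  one_mem' := by
    simp only [Set.mem_setOf_eq]
    norm_cast
    simp
  mul_mem' := by
    intro a b ha hb
    simp only [Set.mem_setOf_eq] at *
    push_cast
    rw [Matrix.det_mul, ha, hb, mul_one]
  inv_mem' := by
    intro a ha
    simp only [Set.mem_setOf_eq] at *
    have h : ((a⁻¹ * a : ↥(Matrix.orthogonalGroup (Fin 3) ℝ)) : Matrix (Fin 3) (Fin 3) ℝ)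
        = ((1 : ↥(Matrix.orthogonalGroup (Fin 3) ℝ)) : Matrix (Fin 3) (Fin 3) ℝ) := by
      rw [inv_mul_cancel]
    push_cast at h
    have := congrArg Matrix.det h
    rw [Matrix.det_mul, ha, mul_one, Matrix.det_one] at this
    exact this

/-- `Hom(G, ℤ/2)` as an `F₂`-vector space: the submodule of `G → ZMod 2` consisting of
group homomorphisms. -/
def HomGZ2 (G : Type*) [Group G] : Submodule (ZMod 2) (G → ZMod 2) where
  carrier := {φ | ∀ a b : G, φ (a * b) = φ a + φ b}
  zero_mem' := by intro a b; simp
  add_mem' := by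
    intro φ ψ hφ hψ a b
    simp only [Pi.add_apply, hφ a b, hψ a b]
    abel
  smul_mem' := by
    intro c φ hφ a b
    simp only [Pi.smul_apply, hφ a b, smul_add]

-- ZMod 2 combinatorial helpers
abbrev Z22 := ZMod 2 × ZMod 2

def i3 : Fin 3 → Z22 := ![(1,0),(0,1),(1,1)]

def idx3 (z : Z22) : Fin 3 := if z = (1,0) then 0 else if z = (0,1) then 1 else 2

def mfun (p q : Z22) (z : Z22) : Z22 := (z.1 * p.1 + z.2 * q.1, z.1 * p.2 + z.2 * q.2)

lemma F1 : ∀ p q : Z22, p ≠ 0 → q ≠ 0 → p ≠ q → p.1 * q.2 + q.1 * p.2 = 1 := by decide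

lemma F2 : ∀ z : Z22, z = 0 ∨ z = i3 0 ∨ z = i3 1 ∨ z = i3 2 := by decide

lemma F3 : ∀ p q : Z22, p ≠ 0 → q ≠ 0 → p ≠ q →
    ∀ i, i3 (idx3 (mfun p q (i3 i))) = mfun p q (i3 i) := by decide

lemma F4 : ∀ p q : Z22, p ≠ 0 → q ≠ 0 → p ≠ q →
    ∀ i j : Fin 3, idx3 (mfun p q (i3 i)) = idx3 (mfun p q (i3 j)) → i = j := by decide

lemma Z22_add_self (z : Z22) : z + z = 0 := by
  fin_cases z <;> rfl

lemma Z22_add_eq_zero {u v : Z22} (h : u + v = 0) : u = v := by revert h; revert u v; decide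

lemma Z22_ne_cases : ∀ z : Z22, z ≠ 0 → z.1 = 1 ∨ z.2 = 1 := by decide

-- ZMod 2 module helpers
lemma z2_neg_eq {M : Type*} [AddCommGroup M] [Module (ZMod 2) M] (a : M) : -a = a := by
  have h1 : (-1 : ZMod 2) = 1 := by decide
  rw [← neg_one_smul (ZMod 2) a, h1, one_smul]

lemma z2_add_eq_zero {M : Type*} [AddCommGroup M] [Module (ZMod 2) M] {a b : M}
    (h : a + b = 0) : a = b :=
  (eq_neg_of_add_eq_zero_left h).trans (z2_neg_eq b)

lemma iota_comm {M : Type*} [AddCommGroup M] [Module (ZMod 2) M] (u v : M) :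
    ExteriorAlgebra.ι (ZMod 2) u * ExteriorAlgebra.ι (ZMod 2) v
      = ExteriorAlgebra.ι (ZMod 2) v * ExteriorAlgebra.ι (ZMod 2) u := by
  have h := ExteriorAlgebra.ι_sq_zero (R := ZMod 2) (u + v)
  rw [map_add, add_mul, mul_add, mul_add, ExteriorAlgebra.ι_sq_zero,
    ExteriorAlgebra.ι_sq_zero, zero_add, add_zero] at h
  exact z2_add_eq_zero h

lemma wedge_expand {M : Type*} [AddCommGroup M] [Module (ZMod 2) M] (u v : M) (α β γ δ : ZMod 2) :
    ExteriorAlgebra.ι (ZMod 2) (α • u + β • v) * ExteriorAlgebra.ι (ZMod 2) (γ • u + δ • v)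
      = (α * δ + β * γ) • (ExteriorAlgebra.ι (ZMod 2) u * ExteriorAlgebra.ι (ZMod 2) v) := by
  simp only [map_add, _root_.map_smul]
  rw [add_mul, mul_add, mul_add, smul_mul_smul_comm, smul_mul_smul_comm, smul_mul_smul_comm,
    smul_mul_smul_comm, ExteriorAlgebra.ι_sq_zero, ExteriorAlgebra.ι_sq_zero, iota_comm v u,
    smul_zero, smul_zero, zero_add, add_zero, ← add_smul]

-- concrete 4x4 matrix representation of the exterior algebra on two generators over F2
def XM : Matrix (Fin 4) (Fin 4) (ZMod 2) :=
  Matrix.of fun i j => if (i = 1 ∧ j = 0) ∨ (i = 3 ∧ j = 2) then 1 else 0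

def YM : Matrix (Fin 4) (Fin 4) (ZMod 2) :=
  Matrix.of fun i j => if (i = 2 ∧ j = 0) ∨ (i = 3 ∧ j = 1) then 1 else 0

lemma XMXM : XM * XM = 0 := by
  ext i j
  fin_cases i <;> fin_cases j <;> decide

lemma YMYM : YM * YM = 0 := by
  ext i j
  fin_cases i <;> fin_cases j <;> decide

lemma YMXM : YM * XM = XM * YM := by
  ext i j
  fin_cases i <;> fin_cases j <;> decide

lemma XY30 : (XM * YM) 3 0 = 1 := by decide

lemma mprod (u1 v1 u2 v2 : ZMod 2) :
    (u1 • XM + v1 • YM) * (u2 • XM + v2 • YM) = (u1 * v2 + v1 * u2) • (XM * YM) := by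
  rw [add_mul, mul_add, mul_add, smul_mul_smul_comm, smul_mul_smul_comm, smul_mul_smul_comm,
    smul_mul_smul_comm, XMXM, YMYM, YMXM, smul_zero, smul_zero, zero_add, add_zero, ← add_smul]

lemma wedge_eval {G : Type*} [Group G] (f₁ f₂ g₁ g₂ : ↥(HomGZ2 G))
    (h : ExteriorAlgebra.ι (ZMod 2) f₁ * ExteriorAlgebra.ι (ZMod 2) f₂
        = ExteriorAlgebra.ι (ZMod 2) g₁ * ExteriorAlgebra.ι (ZMod 2) g₂) (x y : G) :
    (f₁ : G → ZMod 2) x * (f₂ : G → ZMod 2) y + (f₁ : G → ZMod 2) y * (f₂ : G → ZMod 2) x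
      = (g₁ : G → ZMod 2) x * (g₂ : G → ZMod 2) y
        + (g₁ : G → ZMod 2) y * (g₂ : G → ZMod 2) x := by
  classical
  set φ : ↥(HomGZ2 G) →ₗ[ZMod 2] Matrix (Fin 4) (Fin 4) (ZMod 2) :=
    { toFun := fun ψ => (ψ : G → ZMod 2) x • XM + (ψ : G → ZMod 2) y • YM
      map_add' := by
        intro ψ χ
        simp only [Submodule.coe_add, Pi.add_apply, add_smul]
        abel
      map_smul' := by
        intro c ψ
        simp only [SetLike.val_smul, Pi.smul_apply, smul_eq_mul, RingHom.id_apply, smul_add,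
          mul_smul] } with hφ_def
  have hsq : ∀ ψ, φ ψ * φ ψ = 0 := by
    intro ψ
    show ((ψ : G → ZMod 2) x • XM + (ψ : G → ZMod 2) y • YM)
        * ((ψ : G → ZMod 2) x • XM + (ψ : G → ZMod 2) y • YM) = 0
    rw [mprod]
    have : ∀ c : ZMod 2, c + c = 0 := by decide
    rw [mul_comm, this, zero_smul]
  have h2 := congrArg (⇑(ExteriorAlgebra.lift (ZMod 2) ⟨φ, hsq⟩)) h
  rw [_root_.map_mul, _root_.map_mul, ExteriorAlgebra.lift_ι_apply, ExteriorAlgebra.lift_ι_apply,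
    ExteriorAlgebra.lift_ι_apply, ExteriorAlgebra.lift_ι_apply] at h2
  have h3 : ((f₁ : G → ZMod 2) x * (f₂ : G → ZMod 2) y
        + (f₁ : G → ZMod 2) y * (f₂ : G → ZMod 2) x) • (XM * YM)
      = ((g₁ : G → ZMod 2) x * (g₂ : G → ZMod 2) y
        + (g₁ : G → ZMod 2) y * (g₂ : G → ZMod 2) x) • (XM * YM) := by
    rw [← mprod, ← mprod]
    exact h2
  have h4 := congrFun (congrFun (congrArg (fun M => M) h3) 3) 0
  simp only [Matrix.smul_apply, XY30, smul_eq_mul, mul_one] at h4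
  exact h4

-- coercion plumbing
def soM (s : ↥SO3) : Mat3 := s.val.val

lemma soM_mul (s t : ↥SO3) : soM (s * t) = soM s * soM t := rfl

lemma soM_one : soM 1 = 1 := rfl

lemma soM_inj : Function.Injective soM := by
  intro s t h
  exact Subtype.ext (Subtype.ext h)

lemma soM_inv (s : ↥SO3) : soM s⁻¹ = (soM s)ᵀ := by
  show (star (s.val.val) : Mat3) = (s.val.val)ᵀ
  rw [Matrix.star_eq_conjTranspose, Matrix.conjTranspose_eq_transpose_of_trivial]

lemma soM_orth (s : ↥SO3) : (soM s)ᵀ * soM s = 1 := by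
  have h := s.val.2.1
  rwa [Matrix.star_eq_conjTranspose, Matrix.conjTranspose_eq_transpose_of_trivial] at h

lemma soM_det (s : ↥SO3) : (soM s).det = 1 := s.2

def toM {V : Subgroup ↥SO3} (v : ↥V) : Mat3 := soM v.val

lemma toM_mul {V : Subgroup ↥SO3} (v w : ↥V) : toM (v * w) = toM v * toM w := rfl

lemma toM_one {V : Subgroup ↥SO3} : toM (1 : ↥V) = 1 := rfl

lemma toM_inj {V : Subgroup ↥SO3} : Function.Injective (toM (V := V)) := by
  intro v w h
  exact Subtype.ext (soM_inj h)

lemma Dmat_mul_01 : Dmat 0 * Dmat 1 = Dmat 2 := by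
  ext r s
  simp only [Matrix.mul_apply, Fin.sum_univ_three, Dmat_entries]
  fin_cases r <;> fin_cases s <;> norm_num [Fin.ext_iff]

/-- Two surjective homomorphisms from `G` onto a Klein four subgroup `V` of `SO(3)` are
conjugate in `SO(3)` if and only if their components have the same wedge product in
`⋀²(Hom(G, ℤ/2))`. -/
theorem conjugate_iff_same_wedge {G : Type*} [Group G] (V : Subgroup ↥SO3)
    (e : ↥V ≃* Multiplicative (ZMod 2 × ZMod 2))
    (f g : G →* ↥V) (hf : Function.Surjective f) (hg : Function.Surjective g)
    (f₁ f₂ g₁ g₂ : ↥(HomGZ2 G))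
    (hf₁₂ : ∀ x : G,
      Multiplicative.toAdd (e (f x)) = ((f₁ : G → ZMod 2) x, (f₂ : G → ZMod 2) x))
    (hg₁₂ : ∀ x : G,
      Multiplicative.toAdd (e (g x)) = ((g₁ : G → ZMod 2) x, (g₂ : G → ZMod 2) x)) :
    (∃ h : ↥SO3, ∀ x : G, ((g x : ↥V) : ↥SO3) = h * ((f x : ↥V) : ↥SO3) * h⁻¹) ↔
      ExteriorAlgebra.ι (ZMod 2) f₁ * ExteriorAlgebra.ι (ZMod 2) f₂ =
        ExteriorAlgebra.ι (ZMod 2) g₁ * ExteriorAlgebra.ι (ZMod 2) g₂ := by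
  classical
  set π : G → Z22 := fun x => ((f₁ : G → ZMod 2) x, (f₂ : G → ZMod 2) x) with hπ_def
  set ρ : G → Z22 := fun x => ((g₁ : G → ZMod 2) x, (g₂ : G → ZMod 2) x) with hρ_def
  have hfe : ∀ x, f x = e.symm (Multiplicative.ofAdd (π x)) := by
    intro x
    apply e.injective
    rw [MulEquiv.apply_symm_apply]
    apply Multiplicative.toAdd.injective
    simpa using hf₁₂ x
  have hge : ∀ x, g x = e.symm (Multiplicative.ofAdd (ρ x)) := by
    intro x
    apply e.injective
    rw [MulEquiv.apply_symm_apply]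
    apply Multiplicative.toAdd.injective
    simpa using hg₁₂ x
  have hπhom : ∀ x y, π (x * y) = π x + π y := fun x y => Prod.ext (f₁.2 x y) (f₂.2 x y)
  have hρhom : ∀ x y, ρ (x * y) = ρ x + ρ y := fun x y => Prod.ext (g₁.2 x y) (g₂.2 x y)
  have hπ1 : π 1 = 0 := by
    have h1 := hπhom 1 1
    rw [one_mul] at h1
    exact (left_eq_add.mp h1)
  have hρ1 : ρ 1 = 0 := by
    have h1 := hρhom 1 1
    rw [one_mul] at h1
    exact (left_eq_add.mp h1)
  have hπinv : ∀ x, π x⁻¹ = π x := by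
    intro x
    have h1 := hπhom x⁻¹ x
    rw [inv_mul_cancel, hπ1] at h1
    exact Z22_add_eq_zero h1.symm
  have hρinv : ∀ x, ρ x⁻¹ = ρ x := by
    intro x
    have h1 := hρhom x⁻¹ x
    rw [inv_mul_cancel, hρ1] at h1
    exact Z22_add_eq_zero h1.symm
  have hfone : ∀ x, f x = 1 ↔ π x = 0 := by
    intro x
    rw [hfe x]
    constructor
    · intro h1
      have h2 := congrArg e h1
      rw [MulEquiv.apply_symm_apply, _root_.map_one] at h2
      have h3 := congrArg Multiplicative.toAdd h2
      simpa using h3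
    · intro h1
      rw [h1]
      show e.symm (Multiplicative.ofAdd 0) = 1
      rw [ofAdd_zero, _root_.map_one]
  have hgone : ∀ x, g x = 1 ↔ ρ x = 0 := by
    intro x
    rw [hge x]
    constructor
    · intro h1
      have h2 := congrArg e h1
      rw [MulEquiv.apply_symm_apply, _root_.map_one] at h2
      have h3 := congrArg Multiplicative.toAdd h2
      simpa using h3
    · intro h1
      rw [h1]
      show e.symm (Multiplicative.ofAdd 0) = 1
      rw [ofAdd_zero, _root_.map_one]
  have hπsurj : ∀ z, ∃ x, π x = z := by
    intro z
    obtain ⟨x, hx⟩ := hf (e.symm (Multiplicative.ofAdd z))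
    refine ⟨x, ?_⟩
    have h2 := (hfe x).symm.trans hx
    have h3 := congrArg e h2
    rw [MulEquiv.apply_symm_apply, MulEquiv.apply_symm_apply] at h3
    exact Multiplicative.ofAdd.injective h3
  have hρsurj : ∀ z, ∃ x, ρ x = z := by
    intro z
    obtain ⟨x, hx⟩ := hg (e.symm (Multiplicative.ofAdd z))
    refine ⟨x, ?_⟩
    have h2 := (hge x).symm.trans hx
    have h3 := congrArg e h2
    rw [MulEquiv.apply_symm_apply, MulEquiv.apply_symm_apply] at h3
    exact Multiplicative.ofAdd.injective h3
  have htrans : (∀ x, π x = 0 ↔ ρ x = 0) → ∀ x y, π x = π y → ρ x = ρ y := by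
    intro hk x y hxy
    have h1 : π (x⁻¹ * y) = 0 := by
      rw [hπhom, hπinv, hxy]
      exact Z22_add_self _
    have h2 := (hk _).mp h1
    rw [hρhom, hρinv] at h2
    exact Z22_add_eq_zero h2
  have htrans' : (∀ x, π x = 0 ↔ ρ x = 0) → ∀ x y, ρ x = ρ y → π x = π y := by
    intro hk x y hxy
    have h1 : ρ (x⁻¹ * y) = 0 := by
      rw [hρhom, hρinv, hxy]
      exact Z22_add_self _
    have h2 := (hk _).mpr h1
    rw [hπhom, hπinv] at h2
    exact Z22_add_eq_zero h2
  have hMAIN : (∀ x, π x = 0 ↔ ρ x = 0) →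
      ∃ p q : Z22, p ≠ 0 ∧ q ≠ 0 ∧ p ≠ q ∧ ∀ x, ρ x = mfun p q (π x) := by
    intro hk
    obtain ⟨xa, hxa⟩ := hπsurj (1,0)
    obtain ⟨xb, hxb⟩ := hπsurj (0,1)
    refine ⟨ρ xa, ρ xb, ?_, ?_, ?_, ?_⟩
    · intro h0
      have h1 := (hk xa).mpr h0
      rw [hxa] at h1
      exact absurd h1 (by decide)
    · intro h0
      have h1 := (hk xb).mpr h0
      rw [hxb] at h1
      exact absurd h1 (by decide)
    · intro hpq
      have h1 := htrans' hk xa xb hpq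
      rw [hxa, hxb] at h1
      exact absurd h1 (by decide)
    · intro x
      rcases F2 (π x) with h | h | h | h
      · rw [h]
        have h2 : ρ x = 0 := (hk x).mp h
        rw [h2]
        show (0 : Z22) = mfun (ρ xa) (ρ xb) 0
        simp [mfun]
        rfl
      · have h2 : ρ x = ρ xa := htrans hk x xa (by rw [h, hxa]; rfl)
        rw [h, h2]
        apply Prod.ext <;> simp [mfun, i3]
      · have h2 : ρ x = ρ xb := htrans hk x xb (by rw [h, hxb]; rfl)
        rw [h, h2]
        apply Prod.ext <;> simp [mfun, i3]
      · have hxab : π (xa * xb) = i3 2 := by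
          rw [hπhom, hxa, hxb]; decide
        have h2 : ρ x = ρ (xa * xb) := htrans hk x _ (by rw [h, hxab])
        rw [h, h2, hρhom]
        apply Prod.ext <;> simp [mfun, i3]
  constructor
  · rintro ⟨h, hconj⟩
    have hk : ∀ x, π x = 0 ↔ ρ x = 0 := by
      intro x
      rw [← hfone, ← hgone]
      constructor
      · intro h1
        have h2 := hconj x
        rw [h1, OneMemClass.coe_one, mul_one, mul_inv_cancel] at h2
        exact OneMemClass.coe_eq_one.mp h2
      · intro h1
        have h2 := hconj x
        rw [h1, OneMemClass.coe_one] at h2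
        have h5 : ((f x : ↥V) : ↥SO3) = 1 := by
          have h6 : h * ((f x : ↥V) : ↥SO3) * h⁻¹ = 1 := h2.symm
          calc ((f x : ↥V) : ↥SO3) = h⁻¹ * (h * ((f x : ↥V) : ↥SO3) * h⁻¹) * h := by group
          _ = h⁻¹ * 1 * h := by rw [h6]
          _ = 1 := by group
        exact OneMemClass.coe_eq_one.mp h5
    obtain ⟨p, q, hp0, hq0, hpq, hm⟩ := hMAIN hk
    have hg₁ : g₁ = p.1 • f₁ + q.1 • f₂ := by
      apply Subtype.ext
      funext x
      have h1 : (ρ x).1 = (mfun p q (π x)).1 := congrArg Prod.fst (hm x)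
      simp only [Submodule.coe_add, SetLike.val_smul, Pi.add_apply, Pi.smul_apply, smul_eq_mul]
      show (ρ x).1 = p.1 * (π x).1 + q.1 * (π x).2
      rw [h1]
      show (π x).1 * p.1 + (π x).2 * q.1 = _
      ring
    have hg₂ : g₂ = p.2 • f₁ + q.2 • f₂ := by
      apply Subtype.ext
      funext x
      have h1 : (ρ x).2 = (mfun p q (π x)).2 := congrArg Prod.snd (hm x)
      simp only [Submodule.coe_add, SetLike.val_smul, Pi.add_apply, Pi.smul_apply, smul_eq_mul]
      show (ρ x).2 = p.2 * (π x).1 + q.2 * (π x).2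
      rw [h1]
      show (π x).1 * p.2 + (π x).2 * q.2 = _
      ring
    rw [hg₁, hg₂, wedge_expand, F1 p q hp0 hq0 hpq, one_smul]
  · intro hwedge
    have hstar := wedge_eval f₁ f₂ g₁ g₂ hwedge
    have hk : ∀ x, π x = 0 ↔ ρ x = 0 := by
      intro x
      constructor
      · intro h0
        by_contra hne0
        have hf1x : (f₁ : G → ZMod 2) x = 0 := congrArg Prod.fst h0
        have hf2x : (f₂ : G → ZMod 2) x = 0 := congrArg Prod.snd h0
        rcases Z22_ne_cases _ hne0 with h1 | h1
        · obtain ⟨yb, hyb⟩ := hρsurj (0,1)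
          have hs := hstar x yb
          have e1 : (g₁ : G → ZMod 2) yb = 0 := congrArg Prod.fst hyb
          have e2 : (g₂ : G → ZMod 2) yb = 1 := congrArg Prod.snd hyb
          have e3 : (g₁ : G → ZMod 2) x = 1 := h1
          rw [hf1x, hf2x, e1, e2, e3] at hs
          simp only [zero_mul, mul_zero, zero_add, add_zero, one_mul, mul_one] at hs
          exact absurd hs (by decide)
        · obtain ⟨ya, hya⟩ := hρsurj (1,0)
          have hs := hstar x ya
          have e1 : (g₁ : G → ZMod 2) ya = 1 := congrArg Prod.fst hya
          have e2 : (g₂ : G → ZMod 2) ya = 0 := congrArg Prod.snd hya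
          have e3 : (g₂ : G → ZMod 2) x = 1 := h1
          rw [hf1x, hf2x, e1, e2, e3] at hs
          simp only [zero_mul, mul_zero, zero_add, add_zero, one_mul, mul_one] at hs
          exact absurd hs (by decide)
      · intro h0
        by_contra hne0
        have hg1x : (g₁ : G → ZMod 2) x = 0 := congrArg Prod.fst h0
        have hg2x : (g₂ : G → ZMod 2) x = 0 := congrArg Prod.snd h0
        rcases Z22_ne_cases _ hne0 with h1 | h1
        · obtain ⟨yb, hyb⟩ := hπsurj (0,1)
          have hs := hstar x yb
          have e1 : (f₁ : G → ZMod 2) yb = 0 := congrArg Prod.fst hyb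
          have e2 : (f₂ : G → ZMod 2) yb = 1 := congrArg Prod.snd hyb
          have e3 : (f₁ : G → ZMod 2) x = 1 := h1
          rw [hg1x, hg2x, e1, e2, e3] at hs
          simp only [zero_mul, mul_zero, zero_add, add_zero, one_mul, mul_one] at hs
          exact absurd hs (by decide)
        · obtain ⟨ya, hya⟩ := hπsurj (1,0)
          have hs := hstar x ya
          have e1 : (f₁ : G → ZMod 2) ya = 1 := congrArg Prod.fst hya
          have e2 : (f₂ : G → ZMod 2) ya = 0 := congrArg Prod.snd hya
          have e3 : (f₂ : G → ZMod 2) x = 1 := h1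
          rw [hg1x, hg2x, e1, e2, e3] at hs
          simp only [zero_mul, mul_zero, zero_add, add_zero, one_mul, mul_one] at hs
          exact absurd hs (by decide)
    obtain ⟨p, q, hp0, hq0, hpq, hm⟩ := hMAIN hk
    set σfun : Fin 3 → Fin 3 := fun i => idx3 (mfun p q (i3 i)) with hσf_def
    have hinj : Function.Injective σfun := fun i j hij => F4 p q hp0 hq0 hpq i j hij
    have hbij := Finite.injective_iff_bijective.mp hinj
    set σ : Equiv.Perm (Fin 3) := Equiv.ofBijective σfun hbij with hσ_def
    have hσap : ∀ i, σ i = σfun i := fun i => rfl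
    have hkey : ∀ i, i3 (σfun i) = mfun p q (i3 i) := F3 p q hp0 hq0 hpq
    set vv : Fin 3 → ↥V := fun i => e.symm (Multiplicative.ofAdd (i3 i)) with hvv_def
    set AA : Fin 3 → Mat3 := fun i => toM (vv i) with hAA_def
    have hvmul : ∀ i j k : Fin 3, i3 i + i3 j = i3 k → vv i * vv j = vv k := by
      intro i j k hijk
      show e.symm _ * e.symm _ = e.symm _
      rw [← _root_.map_mul, ← ofAdd_add, hijk]
    have hAorth : ∀ i, (AA i)ᵀ * AA i = 1 := fun i => soM_orth _
    have hAdet : ∀ i, (AA i).det = 1 := fun i => soM_det _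
    have hAinv : ∀ i, AA i * AA i = 1 := by
      intro i
      show toM (vv i) * toM (vv i) = 1
      rw [← toM_mul]
      have h1 : vv i * vv i = 1 := by
        show e.symm _ * e.symm _ = 1
        rw [← _root_.map_mul, ← ofAdd_add, Z22_add_self, ofAdd_zero, _root_.map_one]
      rw [h1, toM_one]
    have hA01 : AA 0 * AA 1 = AA 2 := by
      show toM (vv 0) * toM (vv 1) = toM (vv 2)
      rw [← toM_mul, hvmul 0 1 2 (by decide)]
    have hA10 : AA 1 * AA 0 = AA 2 := by
      show toM (vv 1) * toM (vv 0) = toM (vv 2)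
      rw [← toM_mul, hvmul 1 0 2 (by decide)]
    have hvinj : ∀ i j, vv i = vv j → i3 i = i3 j := by
      intro i j hij
      have h1 := congrArg e hij
      rw [MulEquiv.apply_symm_apply, MulEquiv.apply_symm_apply] at h1
      exact Multiplicative.ofAdd.injective h1
    have hAne1 : ∀ i, AA i ≠ 1 := by
      intro i h1
      have h2 : vv i = 1 := toM_inj (h1.trans toM_one.symm)
      have h3 := congrArg e h2
      rw [MulEquiv.apply_symm_apply, _root_.map_one] at h3
      have h4 := congrArg Multiplicative.toAdd h3
      simp only [toAdd_ofAdd, toAdd_one] at h4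
      revert h4
      fin_cases i <;> decide
    have hAne01 : AA 0 ≠ AA 1 := by
      intro h1
      have h2 := hvinj 0 1 (toM_inj h1)
      exact absurd h2 (by decide)
    obtain ⟨a, ha, hA0⟩ := so3_involution_eq_rot3 (hAorth 0) (hAinv 0) (hAdet 0) (hAne1 0)
    obtain ⟨b, hb, hA1⟩ := so3_involution_eq_rot3 (hAorth 1) (hAinv 1) (hAdet 1) (hAne1 1)
    have hab : a ⬝ᵥ b = 0 := by
      apply axes_orth ha hb
      · rw [← hA0, ← hA1, hA01, hA10]
      · rw [← hA0, ← hA1]; exact hAne01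
    set c : Fin 3 → ℝ := a ⨯₃ b with hc_def
    have hcc : c ⬝ᵥ c = 1 := by rw [hc_def, cross_dot_cross, ha, hb, hab]; ring
    have hac : a ⬝ᵥ c = 0 := dot_self_cross a b
    have hbc : b ⬝ᵥ c = 0 := dot_cross_self a b
    have hP : (Pcols a b c)ᵀ * Pcols a b c = 1 := Pcols_orth ha hb hcc hab hac hbc
    have hP' : Pcols a b c * (Pcols a b c)ᵀ = 1 := Pcols_mul_transpose hP
    have hAD0 : AA 0 = Pcols a b c * Dmat 0 * (Pcols a b c)ᵀ := by
      rw [Pcols_D hP' 0]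
      show AA 0 = rot3 a
      exact hA0
    have hAD1 : AA 1 = Pcols a b c * Dmat 1 * (Pcols a b c)ᵀ := by
      rw [Pcols_D hP' 1]
      show AA 1 = rot3 b
      exact hA1
    have hAD2 : AA 2 = Pcols a b c * Dmat 2 * (Pcols a b c)ᵀ := by
      rw [← hA01, hAD0, hAD1, ← Dmat_mul_01]
      calc Pcols a b c * Dmat 0 * (Pcols a b c)ᵀ * (Pcols a b c * Dmat 1 * (Pcols a b c)ᵀ)
          = Pcols a b c * (Dmat 0 * ((Pcols a b c)ᵀ * Pcols a b c) * Dmat 1)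
            * (Pcols a b c)ᵀ := by noncomm_ring
      _ = Pcols a b c * (Dmat 0 * Dmat 1) * (Pcols a b c)ᵀ := by rw [hP, mul_one]
    have hAD : ∀ i, AA i = Pcols a b c * Dmat i * (Pcols a b c)ᵀ := by
      intro i
      fin_cases i
      · exact hAD0
      · exact hAD1
      · exact hAD2
    obtain ⟨R, hR1, hR2, hR3⟩ := perm_realized σ
    have hmatT : (Pcols a b c * R * (Pcols a b c)ᵀ)ᵀ = Pcols a b c * Rᵀ * (Pcols a b c)ᵀ := by
      rw [Matrix.transpose_mul, Matrix.transpose_mul, Matrix.transpose_transpose, ← mul_assoc]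
    have hmat_orth_mat : (Pcols a b c * R * (Pcols a b c)ᵀ)ᵀ * (Pcols a b c * R * (Pcols a b c)ᵀ)
        = 1 := by
      rw [hmatT]
      calc Pcols a b c * Rᵀ * (Pcols a b c)ᵀ * (Pcols a b c * R * (Pcols a b c)ᵀ)
          = Pcols a b c * (Rᵀ * ((Pcols a b c)ᵀ * Pcols a b c) * R) * (Pcols a b c)ᵀ := by
            noncomm_ring
      _ = Pcols a b c * (Rᵀ * R) * (Pcols a b c)ᵀ := by rw [hP, mul_one]
      _ = Pcols a b c * (Pcols a b c)ᵀ := by rw [hR1, mul_one]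
      _ = 1 := hP'
    have hdPP : (Pcols a b c).det * (Pcols a b c).det = 1 := by
      have h1 := congrArg Matrix.det hP'
      rwa [Matrix.det_mul, Matrix.det_transpose, Matrix.det_one] at h1
    have hmat_det : (Pcols a b c * R * (Pcols a b c)ᵀ).det = 1 := by
      rw [Matrix.det_mul, Matrix.det_mul, hR2, mul_one, Matrix.det_transpose]
      rw [mul_comm]
      exact hdPP
    have hmat_mem : Pcols a b c * R * (Pcols a b c)ᵀ ∈ Matrix.orthogonalGroup (Fin 3) ℝ := by
      rw [Matrix.mem_orthogonalGroup_iff']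
      exact hmat_orth_mat
    have hconj : ∀ i, (Pcols a b c * R * (Pcols a b c)ᵀ) * AA i
        * (Pcols a b c * R * (Pcols a b c)ᵀ)ᵀ = AA (σfun i) := by
      intro i
      rw [hAD i, hAD (σfun i), hmatT]
      calc (Pcols a b c * R * (Pcols a b c)ᵀ) * (Pcols a b c * Dmat i * (Pcols a b c)ᵀ)
            * (Pcols a b c * Rᵀ * (Pcols a b c)ᵀ)
          = Pcols a b c * (R * ((Pcols a b c)ᵀ * Pcols a b c) * Dmat i
            * ((Pcols a b c)ᵀ * Pcols a b c) * Rᵀ) * (Pcols a b c)ᵀ := by noncomm_ring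
      _ = Pcols a b c * (R * Dmat i * Rᵀ) * (Pcols a b c)ᵀ := by
            rw [hP, mul_one, mul_one]
      _ = Pcols a b c * Dmat (σ i) * (Pcols a b c)ᵀ := by rw [hR3]
      _ = Pcols a b c * Dmat (σfun i) * (Pcols a b c)ᵀ := by rw [hσap]
    refine ⟨⟨⟨Pcols a b c * R * (Pcols a b c)ᵀ, hmat_mem⟩, hmat_det⟩, fun x => ?_⟩
    apply soM_inj
    rw [soM_mul, soM_mul, soM_inv]
    show toM (g x) = (Pcols a b c * R * (Pcols a b c)ᵀ) * toM (f x)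
        * (Pcols a b c * R * (Pcols a b c)ᵀ)ᵀ
    have hcase : ∀ k : Fin 3, π x = i3 k → toM (g x) = (Pcols a b c * R * (Pcols a b c)ᵀ)
        * toM (f x) * (Pcols a b c * R * (Pcols a b c)ᵀ)ᵀ := by
      intro k hk2
      have hfx : f x = vv k := by rw [hfe x, hk2]
      have hgx : g x = vv (σfun k) := by rw [hge x, hm x, hk2, ← hkey k]
      rw [hfx, hgx]
      exact (hconj k).symm
    rcases F2 (π x) with h | h | h | h
    · have hfx : f x = 1 := (hfone x).mpr h
      have hρx : ρ x = 0 := by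
        rw [hm x, h]
        show mfun p q 0 = 0
        simp [mfun]
      have hgx : g x = 1 := (hgone x).mpr hρx
      rw [hfx, hgx, toM_one, mul_one]
      show (1 : Mat3) = _
      exact (mul_eq_one_comm.mp hmat_orth_mat).symm
    · exact hcase 0 h
    · exact hcase 1 h
    · exact hcase 2 h
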